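/- Let G be a finite group and let M₁, M₂ be G-lattices each fitting into a coflasque resolution 0 → C_i → P_i → M_i → 0 with P_i a permutation lattice and C_i coflasque (i = 1, 2). If M₁ ⊕ Q₁ ≅ M₂ ⊕ Q₂ for some permutation lattices Q₁, Q₂, then C₁ ⊕ P₂ ⊕ Q₁ and C₂ ⊕ P₁ ⊕ Q₂ become isomorphic after adding suitable permutation lattices; in particular C₁ and C₂ are permutation equivalent (C₁ ⊕ R₁ ≅ C₂ ⊕ R₂ for permutation lattices R₁, R₂). -/

import Mathlib

/-- The multiplicative group structure on `AddAut M` (composition), as in the older Mathlib. -/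
instance addAutGroupByComp {M : Type*} [Add M] : Group (AddAut M) where
  mul g h := AddEquiv.trans h g
  one := AddEquiv.refl _
  inv := AddEquiv.symm
  mul_assoc _ _ _ := rfl
  one_mul _ := rfl
  mul_one _ := rfl
  inv_mul_cancel := AddEquiv.self_trans_symm

theorem addAutGroupByComp_one_apply {M : Type*} [Add M] (m : M) : (1 : AddAut M) m = m := rfl

theorem addAutGroupByComp_mul_apply {M : Type*} [Add M] (e₁ e₂ : AddAut M) (m : M) :
    (e₁ * e₂) m = e₁ (e₂ m) := rfl

/-- A 1-cohomology-vanishing ("coflasque") condition for an action `ρ` of `G` on `M`: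
every 1-cocycle of every subgroup is a coboundary. -/
def IsCoflasque {G M : Type*} [Group G] [AddCommGroup M] (ρ : G →* AddAut M) : Prop :=
  ∀ (H : Subgroup G) (c : ↥H → M),
    (∀ g h : ↥H, c (g * h) = c g + ρ ↑g (c h)) → ∃ m : M, ∀ g : ↥H, c g = ρ ↑g m - m

/-- "Flasque" condition (vanishing of `Ĥ⁻¹` for all subgroups): every element killed by
the norm of a subgroup lies in the augmentation submodule. -/
def IsFlasque {G M : Type*} [Group G] [Finite G] [AddCommGroup M] (ρ : G →* AddAut M) : Prop :=
  ∀ (H : Subgroup G) (x : M), (∑ᶠ h : ↥H, ρ ↑h x = 0) →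
    x ∈ AddSubgroup.closure {y | ∃ (h : ↥H) (m : M), y = ρ ↑h m - m}

/-- The permutation action of `G` on `ι → ℤ` induced by an action on `ι`. -/
def permAut {G ι : Type*} [Group G] (act : G →* Equiv.Perm ι) : G →* AddAut (ι → ℤ) where
  toFun g :=
    { toEquiv := Equiv.arrowCongr (act g) (Equiv.refl ℤ)
      map_add' := fun _ _ => rfl }
  map_one' := by ext f i; simp [addAutGroupByComp_one_apply] <;> rfl
  map_mul' := by
    intro g h; ext f i
    simp [← Equiv.Perm.inv_def, mul_inv_rev, Equiv.Perm.mul_apply, addAutGroupByComp_mul_apply] <;> rfl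

/-- `ρ` is a permutation representation: `M` is equivariantly isomorphic to a
finitely generated permutation `G`-lattice. -/
def IsPermutationRep {G M : Type*} [Group G] [AddCommGroup M] (ρ : G →* AddAut M) : Prop :=
  ∃ (ι : Type) (_ : Fintype ι) (act : G →* Equiv.Perm ι) (e : M ≃+ (ι → ℤ)),
    ∀ (g : G) (m : M), e (ρ g m) = permAut act g (e m)

/-- `ρ` is invertible (permutation projective): `M` is an equivariant direct summand of a
finitely generated permutation `G`-lattice. -/
def IsInvertibleRep {G M : Type*} [Group G] [AddCommGroup M] (ρ : G →* AddAut M) : Prop :=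
  ∃ (ι : Type) (_ : Fintype ι) (act : G →* Equiv.Perm ι)
    (f : M →+ (ι → ℤ)) (g : (ι → ℤ) →+ M),
      (∀ (γ : G) (m : M), f (ρ γ m) = permAut act γ (f m)) ∧
      (∀ (γ : G) (x : ι → ℤ), g (permAut act γ x) = ρ γ (g x)) ∧
      (∀ m : M, g (f m) = m)

/-- The diagonal action on a product. -/
def prodAut {G M N : Type*} [Group G] [AddCommGroup M] [AddCommGroup N]
    (ρ : G →* AddAut M) (σ : G →* AddAut N) : G →* AddAut (M × N) where
  toFun g := AddEquiv.prodCongr (ρ g) (σ g)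
  map_one' := by
    ext x <;> simp [AddEquiv.prodCongr, addAutGroupByComp_one_apply]
  map_mul' := by
    intro g h
    ext x <;> simp [AddEquiv.prodCongr, addAutGroupByComp_mul_apply]
section Helpers

lemma permAut_apply {G ι : Type*} [Group G] (act : G →* Equiv.Perm ι) (g : G) (f : ι → ℤ) (i : ι) :
    permAut act g f i = f ((act g).symm i) := rfl

lemma permAut_single {G ι : Type*} [Group G] [DecidableEq ι]
    (act : G →* Equiv.Perm ι) (g : G) (i : ι) :
    permAut act g (Pi.single i (1:ℤ)) = Pi.single (act g i) 1 := by
  funext j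
  rw [permAut_apply]
  simp only [Pi.single_apply]
  by_cases h : j = act g i
  · rw [if_pos (by simp [h]), if_pos h]
  · rw [if_neg (by rw [Equiv.symm_apply_eq]; simpa [eq_comm] using h), if_neg h]

end Helpers
theorem splitting_lemma {G ι C X : Type*} [Group G] [Fintype ι]
    [AddCommGroup C] [AddCommGroup X]
    (act : G →* Equiv.Perm ι) (ρC : G →* AddAut C) (ρX : G →* AddAut X)
    (hC : IsCoflasque ρC)
    (j : C →+ X) (π : X →+ (ι → ℤ))
    (hj : ∀ g c, j (ρC g c) = ρX g (j c))
    (hπ : ∀ g x, π (ρX g x) = permAut act g (π x))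
    (hinj : Function.Injective j) (hsurj : Function.Surjective π)
    (hexact : ∀ x, π x = 0 ↔ x ∈ Set.range j) :
    ∃ f : C × (ι → ℤ) ≃+ X,
      ∀ g y, f (prodAut ρC (permAut act) g y) = ρX g (f y) := by
  classical
  -- Step 1: equivariant lifts of the basis vectors
  have key : ∃ x : ι → X, (∀ i, π (x i) = Pi.single i 1) ∧
      (∀ (g : G) (i : ι), ρX g (x i) = x (act g i)) := by
    -- fixed lifts at every point (for its stabilizer)
    have claim : ∀ i : ι, ∃ xi : X, π xi = Pi.single i (1:ℤ) ∧
        ∀ h : G, act h i = i → ρX h xi = xi := by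
      intro i
      obtain ⟨y, hy⟩ := hsurj (Pi.single i 1)
      set H : Subgroup G :=
        { carrier := {g | act g i = i}
          one_mem' := by simp
          mul_mem' := by
            intro a b ha hb
            simp only [Set.mem_setOf_eq, map_mul, Equiv.Perm.mul_apply] at *
            rw [hb, ha]
          inv_mem' := by
            intro a ha
            show act a⁻¹ i = i
            rw [map_inv]
            conv_lhs => rw [← ha]
            exact Equiv.symm_apply_apply _ _ } with hH
      have hmem : ∀ h : H, act (h : G) i = i := fun h => h.2
      set c : H → C := fun h => Function.invFun j (ρX (h : G) y - y) with hcdef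
      have hc : ∀ h : H, j (c h) = ρX (h : G) y - y := by
        intro h
        apply Function.invFun_eq
        rw [← Set.mem_range, ← hexact]
        rw [map_sub, hπ, hy, permAut_single, hmem h, sub_self]
      have hcoc : ∀ g h : H, c (g * h) = c g + ρC (g : G) (c h) := by
        intro g h
        apply hinj
        rw [map_add, hc, hc, hj, hc]
        simp only [Subgroup.coe_mul, map_mul, addAutGroupByComp_mul_apply, map_sub]
        abel
      obtain ⟨m, hm⟩ := hC H c hcoc
      refine ⟨y - j m, ?_, ?_⟩
      · rw [map_sub, hy, (hexact _).2 ⟨m, rfl⟩, sub_zero]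
      · intro h hh
        have h1 : ρX h y - y = j (ρC h m - m) := by
          rw [← hc ⟨h, hh⟩, hm ⟨h, hh⟩]
        rw [map_sub, ← hj]
        have := sub_eq_iff_eq_add.mp h1
        rw [this, map_sub]
        abel
    choose xr hxr1 hxr2 using claim
    -- orbit representatives
    set sd : Setoid ι :=
      ⟨fun i j => ∃ g : G, act g j = i,
        ⟨fun i => ⟨1, by simp⟩,
         fun {i j} ⟨g, hg⟩ => ⟨g⁻¹, by rw [← hg, map_inv, Equiv.Perm.inv_def, Equiv.symm_apply_apply]⟩,
         fun {i j k} ⟨g, hg⟩ ⟨g', hg'⟩ => ⟨g * g', by rw [map_mul, Equiv.Perm.mul_apply, hg', hg]⟩⟩⟩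
      with hsd
    set rep : ι → ι := fun i => (Quotient.mk sd i).out with hrepdef
    have hrel : ∀ i, ∃ g : G, act g (rep i) = i := by
      intro i
      have : sd.r (rep i) i := Quotient.exact ((Quotient.out_eq (Quotient.mk sd i)))
      obtain ⟨g, hg⟩ := this
      exact ⟨g⁻¹, by rw [← hg, map_inv, Equiv.Perm.inv_def, Equiv.symm_apply_apply]⟩
    have hrep_act : ∀ (g : G) (i : ι), rep (act g i) = rep i := by
      intro g i
      have : (Quotient.mk sd (act g i)) = Quotient.mk sd i := Quotient.sound ⟨g, rfl⟩
      simp only [hrepdef, this]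
    choose gi hgi using hrel
    refine ⟨fun i => ρX (gi i) (xr (rep i)), ?_, ?_⟩
    · intro i
      rw [hπ, hxr1, permAut_single, hgi]
    · intro g i
      have hrw : rep (act g i) = rep i := hrep_act g i
      have hstab : act ((gi (act g i))⁻¹ * (g * gi i)) (rep i) = rep i := by
        have h2 := hgi (act g i)
        rw [hrw] at h2
        rw [map_mul, Equiv.Perm.mul_apply, map_mul, Equiv.Perm.mul_apply, hgi,
          map_inv, Equiv.Perm.inv_def, Equiv.symm_apply_eq]
        exact h2.symm
      have := hxr2 (rep i) _ hstab
      calc ρX g (ρX (gi i) (xr (rep i)))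
          = ρX (gi (act g i)) (ρX ((gi (act g i))⁻¹ * (g * gi i)) (xr (rep i))) := by
            simp only [← addAutGroupByComp_mul_apply, ← map_mul]
            group
        _ = ρX (gi (act g i)) (xr (rep (act g i))) := by rw [this, hrw]
  obtain ⟨x, hx1, hx2⟩ := key
  -- Step 2: the section
  set s : (ι → ℤ) →+ X :=
    AddMonoidHom.mk' (fun f => ∑ i, f i • x i)
      (by intro a b; simp [add_smul, Finset.sum_add_distrib]) with hsdef
  have hπs : ∀ f, π (s f) = f := by
    intro f
    show π (∑ i, f i • x i) = f
    rw [map_sum]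
    funext k
    simp only [Finset.sum_apply, map_zsmul, hx1, Pi.smul_apply, Pi.single_apply,
      smul_eq_mul, mul_ite, mul_one, mul_zero]
    simp
  have hsequiv : ∀ (g : G) (f : ι → ℤ), s (permAut act g f) = ρX g (s f) := by
    intro g f
    show ∑ i, permAut act g f i • x i = ρX g (∑ i, f i • x i)
    rw [map_sum]
    simp only [map_zsmul, hx2, permAut_apply]
    exact (Fintype.sum_equiv (act g) _ _ (fun i => by simp)).symm
  -- Step 3: the equivalence
  set Φ : C × (ι → ℤ) →+ X := j.coprod s with hΦdef
  have hΦ : ∀ p : C × (ι → ℤ), Φ p = j p.1 + s p.2 := fun p => rfl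
  have hbij : Function.Bijective Φ := by
    constructor
    · rw [injective_iff_map_eq_zero]
      rintro ⟨c, f⟩ h0
      rw [hΦ] at h0
      have hf : f = 0 := by
        have := congrArg π h0
        rw [map_add, (hexact _).2 ⟨c, rfl⟩, hπs, zero_add, map_zero] at this
        exact this
      have hc : c = 0 := by
        apply hinj
        rw [map_zero]
        rw [hf, map_zero, add_zero] at h0
        exact h0
      simp [hc, hf]
    · intro x0
      have hmem : x0 - s (π x0) ∈ Set.range j := by
        rw [← hexact, map_sub, hπs, sub_self]
      refine ⟨(Function.invFun j (x0 - s (π x0)), π x0), ?_⟩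
      rw [hΦ, Function.invFun_eq hmem]
      abel
  refine ⟨AddEquiv.ofBijective Φ hbij, ?_⟩
  intro g y
  show Φ _ = ρX g (Φ y)
  rw [hΦ, hΦ]
  have : prodAut ρC (permAut act) g y = (ρC g y.1, permAut act g y.2) := rfl
  rw [this, map_add]
  simp only [hj, hsequiv]
set_option maxHeartbeats 1600000 in
theorem schanuel_lemma {G ι κ C D M : Type*} [Group G] [Fintype ι] [Fintype κ]
    [AddCommGroup C] [AddCommGroup D] [AddCommGroup M]
    (actI : G →* Equiv.Perm ι) (actK : G →* Equiv.Perm κ)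
    (ρC : G →* AddAut C) (ρD : G →* AddAut D) (ρM : G →* AddAut M)
    (hC : IsCoflasque ρC) (hD : IsCoflasque ρD)
    (jC : C →+ (ι → ℤ)) (pI : (ι → ℤ) →+ M)
    (jD : D →+ (κ → ℤ)) (pK : (κ → ℤ) →+ M)
    (hjC : ∀ g c, jC (ρC g c) = permAut actI g (jC c))
    (hpI : ∀ g p, pI (permAut actI g p) = ρM g (pI p))
    (hjD : ∀ g d, jD (ρD g d) = permAut actK g (jD d))
    (hpK : ∀ g q, pK (permAut actK g q) = ρM g (pK q))
    (hinjC : Function.Injective jC) (hsurjI : Function.Surjective pI)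
    (hexactI : ∀ p, pI p = 0 ↔ p ∈ Set.range jC)
    (hinjD : Function.Injective jD) (hsurjK : Function.Surjective pK)
    (hexactK : ∀ q, pK q = 0 ↔ q ∈ Set.range jD) :
    ∃ f : C × (κ → ℤ) ≃+ D × (ι → ℤ),
      ∀ g y, f (prodAut ρC (permAut actK) g y) =
        prodAut ρD (permAut actI) g (f y) := by
  classical
  set T : G →* AddAut ((ι → ℤ) × (κ → ℤ)) := prodAut (permAut actI) (permAut actK) with hT
  have hTfst : ∀ g x, (T g x).1 = permAut actI g x.1 := fun g x => rfl
  have hTsnd : ∀ g x, (T g x).2 = permAut actK g x.2 := fun g x => rfl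
  set X : AddSubgroup ((ι → ℤ) × (κ → ℤ)) :=
    { carrier := {x | pI x.1 = pK x.2}
      zero_mem' := by simp
      add_mem' := by
        intro a b ha hb
        simp only [Set.mem_setOf_eq, Prod.fst_add, Prod.snd_add, map_add] at *
        rw [ha, hb]
      neg_mem' := by
        intro a ha
        simp only [Set.mem_setOf_eq, Prod.fst_neg, Prod.snd_neg, map_neg] at *
        rw [ha] } with hX
  have hmemX : ∀ x : (ι → ℤ) × (κ → ℤ), x ∈ X ↔ pI x.1 = pK x.2 := fun x => Iff.rfl
  have hpres : ∀ (g : G) (x : (ι → ℤ) × (κ → ℤ)), x ∈ X → T g x ∈ X := by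
    intro g x hx
    rw [hmemX] at *
    rw [hTfst, hTsnd, hpI, hpK, hx]
  set ρX : G →* AddAut ↥X :=
    { toFun := fun g =>
        { toFun := fun x => ⟨T g x.1, hpres g x.1 x.2⟩
          invFun := fun x => ⟨T g⁻¹ x.1, hpres g⁻¹ x.1 x.2⟩
          left_inv := fun x => Subtype.ext (by
            show T g⁻¹ (T g x.1) = x.1
            rw [← addAutGroupByComp_mul_apply, ← map_mul, inv_mul_cancel, map_one, addAutGroupByComp_one_apply])
          right_inv := fun x => Subtype.ext (by
            show T g (T g⁻¹ x.1) = x.1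
            rw [← addAutGroupByComp_mul_apply, ← map_mul, mul_inv_cancel, map_one, addAutGroupByComp_one_apply])
          map_add' := fun x y => Subtype.ext (by
            show T g (x.1 + y.1) = T g x.1 + T g y.1
            rw [map_add]) }
      map_one' := AddEquiv.ext fun x => Subtype.ext (by
        show T 1 x.1 = x.1
        rw [map_one, addAutGroupByComp_one_apply])
      map_mul' := fun g h => AddEquiv.ext fun x => Subtype.ext (by
        show T (g * h) x.1 = T g (T h x.1)
        rw [map_mul, addAutGroupByComp_mul_apply]) } with hρX
  have hρXapp : ∀ (g : G) (x : ↥X), ((ρX g x : ↥X) : (ι → ℤ) × (κ → ℤ)) = T g x.1 :=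
    fun g x => rfl
  -- first splitting: kernel D, quotient (ι → ℤ)
  have hkD : ∀ d : D, ((0 : ι → ℤ), jD d) ∈ X := by
    intro d
    rw [hmemX]
    simp only [map_zero]
    exact ((hexactK _).2 ⟨d, rfl⟩).symm
  set jD' : D →+ ↥X :=
    { toFun := fun d => ⟨((0 : ι → ℤ), jD d), hkD d⟩
      map_zero' := Subtype.ext (by
        show ((0 : ι → ℤ), jD 0) = ((0 : ι → ℤ), (0 : κ → ℤ))
        rw [map_zero])
      map_add' := fun a b => Subtype.ext (by
        show ((0 : ι → ℤ), jD (a + b)) = ((0 : ι → ℤ) + 0, jD a + jD b)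
        rw [map_add, add_zero]) } with hjD'
  set pr1 : ↥X →+ (ι → ℤ) := (AddMonoidHom.fst _ _).comp X.subtype with hpr1
  obtain ⟨f₁, hf₁⟩ := splitting_lemma actI ρD ρX hD jD' pr1
    (by
      intro g d
      apply Subtype.ext
      apply Prod.ext
      · show (0 : ι → ℤ) = permAut actI g 0
        rw [map_zero]
      · show jD (ρD g d) = permAut actK g (jD d)
        exact hjD g d)
    (by intro g x; rfl)
    (by
      intro a b hab
      apply hinjD
      have := congrArg (fun z : ↥X => (z : (ι → ℤ) × (κ → ℤ)).2) hab
      exact this)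
    (by
      intro p
      obtain ⟨q, hq⟩ := hsurjK (pI p)
      exact ⟨⟨(p, q), (hmemX _).2 hq.symm⟩, rfl⟩)
    (by
      intro x
      constructor
      · intro h0
        have hx2 : pK (x : (ι → ℤ) × (κ → ℤ)).2 = 0 := by
          have := (hmemX _).1 x.2
          rw [← this]
          have h1 : (x : (ι → ℤ) × (κ → ℤ)).1 = 0 := h0
          rw [h1, map_zero]
        obtain ⟨d, hd⟩ := (hexactK _).1 hx2
        refine ⟨d, ?_⟩
        apply Subtype.ext
        apply Prod.ext
        · exact (show (0:ι → ℤ) = _ from h0.symm)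
        · exact hd
      · rintro ⟨d, rfl⟩
        rfl)
  -- second splitting: kernel C, quotient (κ → ℤ)
  have hkC : ∀ c : C, (jC c, (0 : κ → ℤ)) ∈ X := by
    intro c
    rw [hmemX]
    simp only [map_zero]
    exact (hexactI _).2 ⟨c, rfl⟩
  set jC' : C →+ ↥X :=
    { toFun := fun c => ⟨(jC c, (0 : κ → ℤ)), hkC c⟩
      map_zero' := Subtype.ext (by
        show (jC 0, (0 : κ → ℤ)) = ((0 : ι → ℤ), (0 : κ → ℤ))
        rw [map_zero])
      map_add' := fun a b => Subtype.ext (by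
        show (jC (a + b), (0 : κ → ℤ)) = (jC a + jC b, (0 : κ → ℤ) + 0)
        rw [map_add, add_zero]) } with hjC'
  set pr2 : ↥X →+ (κ → ℤ) := (AddMonoidHom.snd _ _).comp X.subtype with hpr2
  obtain ⟨f₂, hf₂⟩ := splitting_lemma actK ρC ρX hC jC' pr2
    (by
      intro g c
      apply Subtype.ext
      apply Prod.ext
      · show jC (ρC g c) = permAut actI g (jC c)
        exact hjC g c
      · show (0 : κ → ℤ) = permAut actK g 0
        rw [map_zero])
    (by intro g x; rfl)
    (by
      intro a b hab
      apply hinjC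
      exact congrArg (fun z : ↥X => (z : (ι → ℤ) × (κ → ℤ)).1) hab)
    (by
      intro q
      obtain ⟨p, hp⟩ := hsurjI (pK q)
      exact ⟨⟨(p, q), (hmemX _).2 hp⟩, rfl⟩)
    (by
      intro x
      constructor
      · intro h0
        have hx1 : pI (x : (ι → ℤ) × (κ → ℤ)).1 = 0 := by
          have := (hmemX _).1 x.2
          rw [this]
          have h1 : (x : (ι → ℤ) × (κ → ℤ)).2 = 0 := h0
          rw [h1, map_zero]
        obtain ⟨c, hc⟩ := (hexactI _).1 hx1
        refine ⟨c, ?_⟩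
        apply Subtype.ext
        apply Prod.ext
        · exact hc
        · exact (show (0:κ → ℤ) = _ from h0.symm)
      · rintro ⟨c, rfl⟩
        rfl)
  refine ⟨f₂.trans f₁.symm, ?_⟩
  intro g y
  have hsymm : ∀ (g : G) (x : ↥X),
      f₁.symm (ρX g x) = prodAut ρD (permAut actI) g (f₁.symm x) := by
    intro g x
    apply f₁.injective
    rw [AddEquiv.apply_symm_apply, hf₁, AddEquiv.apply_symm_apply]
  show f₁.symm (f₂ _) = _
  rw [hf₂, hsymm]
  rfl
def sumActHom {G : Type*} (ι κ : Type*) [Group G] (a : G →* Equiv.Perm ι)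
    (b : G →* Equiv.Perm κ) : G →* Equiv.Perm (ι ⊕ κ) :=
  (Equiv.Perm.sumCongrHom ι κ).comp (a.prod b)

def sumSplit (ι κ : Type*) : ((ι ⊕ κ) → ℤ) ≃+ (ι → ℤ) × (κ → ℤ) where
  toFun f := (f ∘ Sum.inl, f ∘ Sum.inr)
  invFun p := Sum.elim p.1 p.2
  left_inv f := by funext x; cases x <;> rfl
  right_inv p := rfl
  map_add' f g := rfl

lemma sumSplit_equivariant {G ι κ : Type*} [Group G] (a : G →* Equiv.Perm ι)
    (b : G →* Equiv.Perm κ) (g : G) (f : ι ⊕ κ → ℤ) :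
    sumSplit ι κ (permAut (sumActHom ι κ a b) g f) =
      prodAut (permAut a) (permAut b) g (sumSplit ι κ f) := rfl
theorem resolution_transport {G ιP ιQ C P Q M N : Type*} [Group G] [Fintype ιP] [Fintype ιQ]
    [AddCommGroup C] [AddCommGroup P] [AddCommGroup Q] [AddCommGroup M] [AddCommGroup N]
    (aP : G →* Equiv.Perm ιP) (aQ : G →* Equiv.Perm ιQ)
    (ρC : G →* AddAut C) (ρP : G →* AddAut P) (ρQ : G →* AddAut Q)
    (ρM : G →* AddAut M) (ρN : G →* AddAut N)
    (eP : P ≃+ (ιP → ℤ)) (eQ : Q ≃+ (ιQ → ℤ))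
    (heP : ∀ g m, eP (ρP g m) = permAut aP g (eP m))
    (heQ : ∀ g m, eQ (ρQ g m) = permAut aQ g (eQ m))
    (j : C →+ P) (π : P →+ M)
    (hj : ∀ g x, j (ρC g x) = ρP g (j x)) (hπ : ∀ g x, π (ρP g x) = ρM g (π x))
    (hinj : Function.Injective j) (hsurj : Function.Surjective π)
    (hexact : ∀ x : P, π x = 0 ↔ x ∈ Set.range j)
    (e : M × Q ≃+ N)
    (he : ∀ g x, e (prodAut ρM ρQ g x) = ρN g (e x)) :
    ∃ (jC : C →+ ((ιP ⊕ ιQ) → ℤ)) (pI : ((ιP ⊕ ιQ) → ℤ) →+ N),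
      (∀ g c, jC (ρC g c) = permAut (sumActHom ιP ιQ aP aQ) g (jC c)) ∧
      (∀ g p, pI (permAut (sumActHom ιP ιQ aP aQ) g p) = ρN g (pI p)) ∧
      Function.Injective jC ∧ Function.Surjective pI ∧
      (∀ p, pI p = 0 ↔ p ∈ Set.range jC) := by
  classical
  set S := sumActHom ιP ιQ aP aQ with hS
  set E : ((ιP ⊕ ιQ) → ℤ) ≃+ P × Q :=
    (sumSplit ιP ιQ).trans (AddEquiv.prodCongr eP.symm eQ.symm) with hE
  have hePs : ∀ (g : G) (p : ιP → ℤ), eP.symm (permAut aP g p) = ρP g (eP.symm p) := by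
    intro g p
    apply eP.injective
    rw [heP, AddEquiv.apply_symm_apply, AddEquiv.apply_symm_apply]
  have heQs : ∀ (g : G) (q : ιQ → ℤ), eQ.symm (permAut aQ g q) = ρQ g (eQ.symm q) := by
    intro g q
    apply eQ.injective
    rw [heQ, AddEquiv.apply_symm_apply, AddEquiv.apply_symm_apply]
  have hEeq : ∀ (g : G) (f : (ιP ⊕ ιQ) → ℤ),
      E (permAut S g f) = prodAut ρP ρQ g (E f) := by
    intro g f
    show AddEquiv.prodCongr eP.symm eQ.symm (sumSplit ιP ιQ (permAut S g f)) = _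
    rw [sumSplit_equivariant]
    apply Prod.ext
    · exact hePs g _
    · exact heQs g _
  have hEs : ∀ (g : G) (x : P × Q),
      E.symm (prodAut ρP ρQ g x) = permAut S g (E.symm x) := by
    intro g x
    apply E.injective
    rw [AddEquiv.apply_symm_apply, hEeq, AddEquiv.apply_symm_apply]
  set pm : P × Q →+ M × Q := π.prodMap (AddMonoidHom.id Q) with hpm
  have hpmapp : ∀ x : P × Q, pm x = (π x.1, x.2) := fun x => rfl
  have hpmeq : ∀ (g : G) (x : P × Q),
      pm (prodAut ρP ρQ g x) = prodAut ρM ρQ g (pm x) := by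
    intro g x
    apply Prod.ext
    · exact hπ g x.1
    · rfl
  refine ⟨E.symm.toAddMonoidHom.comp ((AddMonoidHom.inl P Q).comp j),
    (e.toAddMonoidHom.comp pm).comp E.toAddMonoidHom, ?_, ?_, ?_, ?_, ?_⟩
  · intro g c
    show E.symm (j (ρC g c), 0) = permAut S g (E.symm (j c, 0))
    rw [hj, ← hEs]
    congr 1
    apply Prod.ext
    · rfl
    · show (0 : Q) = ρQ g 0
      rw [map_zero]
  · intro g p
    show e (pm (E (permAut S g p))) = ρN g (e (pm (E p)))
    rw [hEeq, hpmeq, he]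
  · intro a b hab
    have h1 := E.symm.injective hab
    exact hinj (congrArg Prod.fst h1)
  · intro n
    obtain ⟨x, hx⟩ := e.surjective n
    obtain ⟨p, hp⟩ := hsurj x.1
    refine ⟨E.symm (p, x.2), ?_⟩
    show e (pm (E (E.symm (p, x.2)))) = n
    rw [AddEquiv.apply_symm_apply, hpmapp, hp]
    rw [← hx]
  · intro p
    constructor
    · intro h0
      have h1 : pm (E p) = 0 := by
        apply e.injective
        rw [map_zero]
        exact h0
      have h2 : π (E p).1 = 0 := congrArg Prod.fst h1
      have h3 : (E p).2 = 0 := congrArg Prod.snd h1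
      obtain ⟨c, hc⟩ := (hexact _).1 h2
      refine ⟨c, ?_⟩
      show E.symm (j c, 0) = p
      rw [hc, ← h3]
      exact E.symm_apply_apply p
    · rintro ⟨c, rfl⟩
      show e (pm (E (E.symm (j c, 0)))) = 0
      rw [AddEquiv.apply_symm_apply, hpmapp]
      have : π (j c) = 0 := (hexact _).2 ⟨c, rfl⟩
      rw [this]
      show e ((0 : M), (0 : Q)) = 0
      rw [show ((0 : M), (0 : Q)) = (0 : M × Q) from rfl, map_zero]
/-- Schanuel-type uniqueness of the coflasque class: if `0 → Cᵢ → Pᵢ → Mᵢ → 0` are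
coflasque resolutions (`Pᵢ` permutation, `Cᵢ` coflasque) and `M₁`, `M₂` are permutation
equivalent, then `C₁` and `C₂` are permutation equivalent. -/
theorem coflasque_class_well_defined {G : Type*} [Group G] [Fintype G]
    {M₁ M₂ C₁ C₂ P₁ P₂ Q₁ Q₂ : Type*}
    [AddCommGroup M₁] [AddCommGroup M₂] [AddCommGroup C₁] [AddCommGroup C₂]
    [AddCommGroup P₁] [AddCommGroup P₂] [AddCommGroup Q₁] [AddCommGroup Q₂]
    [Module.Free ℤ M₁] [Module.Finite ℤ M₁] [Module.Free ℤ M₂] [Module.Finite ℤ M₂]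
    [Module.Free ℤ C₁] [Module.Finite ℤ C₁] [Module.Free ℤ C₂] [Module.Finite ℤ C₂]
    [Module.Free ℤ P₁] [Module.Finite ℤ P₁] [Module.Free ℤ P₂] [Module.Finite ℤ P₂]
    [Module.Free ℤ Q₁] [Module.Finite ℤ Q₁] [Module.Free ℤ Q₂] [Module.Finite ℤ Q₂]
    (ρM₁ : G →* AddAut M₁) (ρM₂ : G →* AddAut M₂)
    (ρC₁ : G →* AddAut C₁) (ρC₂ : G →* AddAut C₂)
    (ρP₁ : G →* AddAut P₁) (ρP₂ : G →* AddAut P₂)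
    (ρQ₁ : G →* AddAut Q₁) (ρQ₂ : G →* AddAut Q₂)
    (hP₁ : IsPermutationRep ρP₁) (hP₂ : IsPermutationRep ρP₂)
    (hQ₁ : IsPermutationRep ρQ₁) (hQ₂ : IsPermutationRep ρQ₂)
    (hC₁ : IsCoflasque ρC₁) (hC₂ : IsCoflasque ρC₂)
    (j₁ : C₁ →+ P₁) (π₁ : P₁ →+ M₁) (j₂ : C₂ →+ P₂) (π₂ : P₂ →+ M₂)
    (hj₁ : ∀ g x, j₁ (ρC₁ g x) = ρP₁ g (j₁ x)) (hπ₁ : ∀ g x, π₁ (ρP₁ g x) = ρM₁ g (π₁ x))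
    (hj₂ : ∀ g x, j₂ (ρC₂ g x) = ρP₂ g (j₂ x)) (hπ₂ : ∀ g x, π₂ (ρP₂ g x) = ρM₂ g (π₂ x))
    (hinj₁ : Function.Injective j₁) (hsurj₁ : Function.Surjective π₁)
    (hexact₁ : ∀ x : P₁, π₁ x = 0 ↔ x ∈ Set.range j₁)
    (hinj₂ : Function.Injective j₂) (hsurj₂ : Function.Surjective π₂)
    (hexact₂ : ∀ x : P₂, π₂ x = 0 ↔ x ∈ Set.range j₂)
    (e : M₁ × Q₁ ≃+ M₂ × Q₂)
    (he : ∀ (g : G) (x : M₁ × Q₁), e (prodAut ρM₁ ρQ₁ g x) = prodAut ρM₂ ρQ₂ g (e x)) :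
    ∃ (ι₁ ι₂ : Type) (_ : Fintype ι₁) (_ : Fintype ι₂)
      (a₁ : G →* Equiv.Perm ι₁) (a₂ : G →* Equiv.Perm ι₂)
      (f : C₁ × (ι₁ → ℤ) ≃+ C₂ × (ι₂ → ℤ)),
        ∀ (g : G) (x : C₁ × (ι₁ → ℤ)),
          f (prodAut ρC₁ (permAut a₁) g x) = prodAut ρC₂ (permAut a₂) g (f x) := by
  classical
  obtain ⟨ιP1, iP1, aP1, eP1, heP1⟩ := hP₁
  obtain ⟨ιP2, iP2, aP2, eP2, heP2⟩ := hP₂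
  obtain ⟨ιQ1, iQ1, aQ1, eQ1, heQ1⟩ := hQ₁
  obtain ⟨ιQ2, iQ2, aQ2, eQ2, heQ2⟩ := hQ₂
  haveI := iP1; haveI := iP2; haveI := iQ1; haveI := iQ2
  obtain ⟨jC, pI, hjC, hpI, hinjC, hsurjI, hexactI⟩ :=
    resolution_transport aP1 aQ1 ρC₁ ρP₁ ρQ₁ ρM₁ (prodAut ρM₂ ρQ₂) eP1 eQ1 heP1 heQ1
      j₁ π₁ hj₁ hπ₁ hinj₁ hsurj₁ hexact₁ e he
  obtain ⟨jD, pK, hjD, hpK, hinjD, hsurjK, hexactK⟩ :=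
    resolution_transport aP2 aQ2 ρC₂ ρP₂ ρQ₂ ρM₂ (prodAut ρM₂ ρQ₂) eP2 eQ2 heP2 heQ2
      j₂ π₂ hj₂ hπ₂ hinj₂ hsurj₂ hexact₂ (AddEquiv.refl _) (fun _ _ => rfl)
  obtain ⟨f, hf⟩ := schanuel_lemma (sumActHom ιP1 ιQ1 aP1 aQ1) (sumActHom ιP2 ιQ2 aP2 aQ2)
    ρC₁ ρC₂ (prodAut ρM₂ ρQ₂) hC₁ hC₂ jC pI jD pK hjC hpI hjD hpK
    hinjC hsurjI hexactI hinjD hsurjK hexactK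
  exact ⟨ιP2 ⊕ ιQ2, ιP1 ⊕ ιQ1, inferInstance, inferInstance,
    sumActHom ιP2 ιQ2 aP2 aQ2, sumActHom ιP1 ιQ1 aP1 aQ1, f, hf⟩
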